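/- Let d_1 < d_2 < ... < d_{n-1} be a strictly increasing sequence of positive reals and let k ≥ 1 with k + 1 + k(k+1)/2 ≤ n. Define e_i = d_{k+1-i} + d_{k+2-i} + ... + d_{k+i(i+1)/2} for 1 ≤ i ≤ k. Then (e_{i+1} - e_i) - (e_i - e_{i-1}) > 0 for all 2 ≤ i ≤ k-1, i.e., the sequence e_i is convex. -/
import Mathlib

lemma mono_aux (n : ℕ) (d : ℕ → ℝ)
    (hd_mono : ∀ i, 1 ≤ i → i + 1 ≤ n - 1 → d i < d (i + 1)) :
    ∀ a b, 1 ≤ a → a < b → b ≤ n - 1 → d a < d b := by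
  intro a b ha hab hb
  induction b with
  | zero => omega
  | succ m ih =>
    rcases Nat.lt_or_ge a m with h | h
    · exact lt_trans (ih h (by omega)) (hd_mono m (by omega) (by omega))
    · have : a = m := by omega
      subst this
      exact hd_mono a ha hb

/-- for a strictly increasing sequence of positive reals
`d_1 < ... < d_{n-1}` and `k ≥ 1` with `k + 1 + k(k+1)/2 ≤ n`, the sequence
`e_i = d_{k+1-i} + d_{k+2-i} + ... + d_{k+i(i+1)/2}` (`1 ≤ i ≤ k`) is convex:
`(e_{i+1} - e_i) - (e_i - e_{i-1}) > 0` for all `2 ≤ i ≤ k - 1`. -/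
theorem statement7 (n k : ℕ) (d : ℕ → ℝ)
    (hd_pos : ∀ i, 1 ≤ i → i ≤ n - 1 → 0 < d i)
    (hd_mono : ∀ i, 1 ≤ i → i + 1 ≤ n - 1 → d i < d (i + 1))
    (hk : 1 ≤ k) (hkn : k + 1 + k * (k + 1) / 2 ≤ n)
    (e : ℕ → ℝ)
    (he : ∀ i, e i = ∑ t ∈ Finset.Icc (k + 1 - i) (k + i * (i + 1) / 2), d t) :
    ∀ i, 2 ≤ i → i + 1 ≤ k → (e (i + 1) - e i) - (e i - e (i - 1)) > 0 := by
  intro i hi2 hik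
  have hmono := mono_aux n d hd_mono
  -- abbreviations
  set u : ℕ → ℕ := fun j => k + j * (j + 1) / 2 with hu
  -- arithmetic facts about u
  have hA : (i - 1) * ((i - 1) + 1) + 2 * i = i * (i + 1) := by
    obtain ⟨j, rfl⟩ := Nat.exists_eq_add_of_le hi2
    have h : 2 + j - 1 = j + 1 := by omega
    rw [h]; ring
  have hB : i * (i + 1) + 2 * (i + 1) = (i + 1) * ((i + 1) + 1) := by ring
  have hu1 : u (i - 1) + i = u i := by
    simp only [hu]; omega
  have hu2 : u i + (i + 1) = u (i + 1) := by
    simp only [hu]; omega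
  have huk : u (i + 1) ≤ n - 1 := by
    have h1 : (i + 1) * ((i + 1) + 1) ≤ k * (k + 1) := by
      apply Nat.mul_le_mul <;> omega
    simp only [hu]; omega
  have hui : k + 3 ≤ u i := by
    have : 2 * (2 + 1) ≤ i * (i + 1) := by apply Nat.mul_le_mul <;> omega
    simp only [hu]; omega
  -- rewrite e as sums over Ioc
  have hei : ∀ j, 1 ≤ j → j ≤ k → e j = ∑ t ∈ Finset.Ioc (k - j) (u j), d t := by
    intro j hj1 hjk
    rw [he j]
    congr 1
    rw [← Finset.Icc_add_one_left_eq_Ioc]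
    congr 1
    omega
  have e1 := hei (i + 1) (by omega) (by omega)
  have e2 := hei i (by omega) (by omega)
  have e3 := hei (i - 1) (by omega) (by omega)
  have hki : k - (i - 1) = (k - i) + 1 := by omega
  rw [hki] at e3
  have hkm : k - (i + 1) = (k - i) - 1 := by omega
  rw [hkm] at e1
  -- split sums
  have split1 : (∑ t ∈ Finset.Ioc (k - i - 1) (k - i), d t) +
      (∑ t ∈ Finset.Ioc (k - i) (u (i + 1)), d t) =
      ∑ t ∈ Finset.Ioc (k - i - 1) (u (i + 1)), d t :=
    Finset.sum_Ioc_consecutive _ (by omega) (by omega)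
  have split2 : (∑ t ∈ Finset.Ioc (k - i) (u i), d t) +
      (∑ t ∈ Finset.Ioc (u i) (u (i + 1)), d t) =
      ∑ t ∈ Finset.Ioc (k - i) (u (i + 1)), d t :=
    Finset.sum_Ioc_consecutive _ (by omega) (by omega)
  have split3 : (∑ t ∈ Finset.Ioc (k - i) (u (i - 1)), d t) +
      (∑ t ∈ Finset.Ioc (u (i - 1)) (u i), d t) =
      ∑ t ∈ Finset.Ioc (k - i) (u i), d t :=
    Finset.sum_Ioc_consecutive _ (by omega) (by omega)
  have split4 : (∑ t ∈ Finset.Ioc (k - i) (k - i + 1), d t) +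
      (∑ t ∈ Finset.Ioc (k - i + 1) (u (i - 1)), d t) =
      ∑ t ∈ Finset.Ioc (k - i) (u (i - 1)), d t :=
    Finset.sum_Ioc_consecutive _ (by omega) (by omega)
  have hsingle1 : (∑ t ∈ Finset.Ioc (k - i - 1) (k - i), d t) = d (k - i) := by
    have h : Finset.Ioc (k - i - 1) (k - i) = {k - i} := by
      ext x; simp only [Finset.mem_Ioc, Finset.mem_singleton]; omega
    rw [h, Finset.sum_singleton]
  have hsingle2 : (∑ t ∈ Finset.Ioc (k - i) (k - i + 1), d t) = d (k - i + 1) := by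
    have h : Finset.Ioc (k - i) (k - i + 1) = {k - i + 1} := by
      ext x; simp only [Finset.mem_Ioc, Finset.mem_singleton]; omega
    rw [h, Finset.sum_singleton]
  set D := d (u i + 1) with hD
  -- the top block sum is ≥ (i+1) * D
  have htop : (i + 1 : ℝ) * D ≤ ∑ t ∈ Finset.Ioc (u i) (u (i + 1)), d t := by
    have hcard : (Finset.Ioc (u i) (u (i + 1))).card = i + 1 := by
      rw [Nat.card_Ioc]; omega
    have := Finset.card_nsmul_le_sum (Finset.Ioc (u i) (u (i + 1))) d D ?_
    · rw [hcard] at this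
      simpa [nsmul_eq_mul] using this
    · intro t ht
      simp only [Finset.mem_Ioc] at ht
      rcases Nat.lt_or_ge (u i + 1) t with h | h
      · exact le_of_lt (hmono _ _ (by omega) h (by omega))
      · have ht' : t = u i + 1 := by omega
        rw [ht', hD]
  -- the bottom block sum is < i * D
  have hbot : (∑ t ∈ Finset.Ioc (u (i - 1)) (u i), d t) < (i : ℝ) * D := by
    have hcard : (Finset.Ioc (u (i - 1)) (u i)).card = i := by
      rw [Nat.card_Ioc]; omega
    have hne : (Finset.Ioc (u (i - 1)) (u i)).Nonempty := by
      rw [← Finset.card_pos, hcard]; omega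
    have hlt := Finset.sum_lt_sum_of_nonempty hne
      (f := d) (g := fun _ => D) ?_
    · rw [Finset.sum_const, hcard] at hlt
      simpa [nsmul_eq_mul] using hlt
    · intro t ht
      simp only [Finset.mem_Ioc] at ht
      exact hmono _ _ (by omega) (by omega) (by omega)
  have hdk : d (k - i + 1) < D := hmono _ _ (by omega) (by omega) (by omega)
  have hpos : 0 < d (k - i) := hd_pos _ (by omega) (by omega)
  have hDi : (0:ℝ) < D := hd_pos _ (by omega) (by omega)
  rw [e1, e2, e3, ← split1, ← split2, ← split3, ← split4, hsingle1, hsingle2]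
  have hnonneg : (0:ℝ) ≤ (i : ℝ) := by positivity
  nlinarith [htop, hbot, hdk, hpos]
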